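/- arXiv:2601.03585 — 2 statements merged into one kernel-verified Lean document; each statement's English description precedes it below -/
import Mathlib

section
/- Fix n ≥ 1. For any real n×n matrices P and Q, the identity Λ_P ∧ Λ_Q = det(Q − P)·vol holds in the exterior algebra ⋀(ℝ^{2n}). -/
noncomputable section ExteriorSetup

/-- The exterior algebra `⋀(ℝ^{2n})`. -/
abbrev EA (n : ℕ) := ExteriorAlgebra ℝ (Fin (2 * n) → ℝ)

/-- The `i`-th standard basis vector of `ℝ^{2n}`. -/
def stdv (n : ℕ) (i : Fin (2 * n)) : Fin (2 * n) → ℝ := Pi.single i 1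

/-- The image of the `i`-th standard basis vector in the exterior algebra. -/
def e (n : ℕ) (i : Fin (2 * n)) : EA n := ExteriorAlgebra.ι ℝ (stdv n i)

/-- The index `i` (for `0 ≤ i < n`) viewed in `Fin (2n)`. -/
def lo (n : ℕ) (i : Fin n) : Fin (2 * n) := ⟨i.1, by have := i.isLt; omega⟩

/-- The index `n + i` (for `0 ≤ i < n`) viewed in `Fin (2n)`. -/
def hi (n : ℕ) (i : Fin n) : Fin (2 * n) := ⟨n + i.1, by have := i.isLt; omega⟩

/-- `vol = e₁ ∧ ⋯ ∧ e_{2n}`. -/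
def vol (n : ℕ) : EA n := (List.ofFn fun i : Fin (2 * n) => e n i).prod

/-- `v₁ = e₁ ∧ ⋯ ∧ e_n`. -/
def v₁ (n : ℕ) : EA n := (List.ofFn fun i : Fin n => e n (lo n i)).prod

/-- `v₂ = e_{n+1} ∧ ⋯ ∧ e_{2n}`. -/
def v₂ (n : ℕ) : EA n := (List.ofFn fun i : Fin n => e n (hi n i)).prod

/-- `τ(N) = ∑_{i=1}^n e₁ ∧ ⋯ ∧ e_{i-1} ∧ (∑_{j=1}^n N_{ji} e_{n+j}) ∧ e_{i+1} ∧ ⋯ ∧ e_n`. -/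
def tau (n : ℕ) (N : Matrix (Fin n) (Fin n) ℝ) : EA n :=
  ∑ i : Fin n,
    (List.ofFn fun k : Fin n =>
      if k = i then ExteriorAlgebra.ι ℝ (∑ j : Fin n, N j i • stdv n (hi n j))
      else e n (lo n k)).prod

/-- `Λ_M = (e₁ + ∑_j M_{j1} e_{n+j}) ∧ ⋯ ∧ (e_n + ∑_j M_{jn} e_{n+j})`,
the Plücker vector of the graph Lagrangian `U_M·Span(e₁,…,e_n)`. -/
def LambdaW (n : ℕ) (M : Matrix (Fin n) (Fin n) ℝ) : EA n :=
  (List.ofFn fun i : Fin n =>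
    ExteriorAlgebra.ι ℝ (stdv n (lo n i) + ∑ j : Fin n, M j i • stdv n (hi n j))).prod

end ExteriorSetup

open ExteriorAlgebra
section AuxLemmas

variable {R : Type*} {M : Type*} [CommRing R] [AddCommGroup M] [Module R M]

local notation "ιι" => ExteriorAlgebra.ι R

lemma ι_anticomm (x y : M) : ιι x * ιι y = -(ιι y * ιι x) :=
  eq_neg_of_add_eq_zero_left (ExteriorAlgebra.ι_add_mul_swap x y)

lemma ι_mul_ι_mul_swap (x y : M) (Z : ExteriorAlgebra R M) :
    ιι x * (ιι y * Z) = -(ιι y * (ιι x * Z)) := by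
  rw [← mul_assoc, ι_anticomm, neg_mul, mul_assoc]

/-- If `ι v` kills `Z`, it kills `prod * Z` for any product of `ι`'s. -/
lemma ι_mul_prod_mul (l : List M) (v : M) (Z : ExteriorAlgebra R M)
    (h : ιι v * Z = 0) : ιι v * ((l.map ιι).prod * Z) = 0 := by
  induction l with
  | nil => simpa using h
  | cons w t ih =>
    simp only [List.map_cons, List.prod_cons, mul_assoc]
    rw [ι_mul_ι_mul_swap, ih, mul_zero, neg_zero]

lemma ι_mul_prod_of_mem (l : List M) (v : M) (hv : v ∈ l) :
    ιι v * (l.map ιι).prod = 0 := by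
  induction l with
  | nil => simp at hv
  | cons w t ih =>
    simp only [List.map_cons, List.prod_cons]
    rcases List.mem_cons.mp hv with rfl | hvt
    · rw [← mul_assoc, ExteriorAlgebra.ι_sq_zero, zero_mul]
    · rw [ι_mul_ι_mul_swap, ih hvt, mul_zero, neg_zero]

lemma prod_mul_ι_of_mem (l : List M) (v : M) (hv : v ∈ l) :
    (l.map ιι).prod * ιι v = 0 := by
  induction l with
  | nil => simp at hv
  | cons w t ih =>
    simp only [List.map_cons, List.prod_cons, mul_assoc]
    rcases List.mem_cons.mp hv with rfl | hvt
    · have := ι_mul_prod_mul (R := R) t v (ιι v) (by rw [ExteriorAlgebra.ι_sq_zero])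
      rw [this]
    · rw [ih hvt, mul_zero]

/-- Expanding a product of sums against a left factor that kills the first components. -/
lemma left_absorb (l : List (M × M)) (L : ExteriorAlgebra R M)
    (h : ∀ p ∈ l, L * ιι p.1 = 0) :
    L * (l.map fun p => ιι p.1 + ιι p.2).prod
      = L * (l.map fun p => ιι p.2).prod := by
  induction l generalizing L with
  | nil => simp
  | cons p t ih =>
    simp only [List.map_cons, List.prod_cons]
    rw [← mul_assoc, ← mul_assoc, mul_add, h p List.mem_cons_self, zero_add]
    exact ih (L * ιι p.2) fun q hq => by
      rw [mul_assoc, ι_anticomm, mul_neg, ← mul_assoc, h q (List.mem_cons_of_mem _ hq),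
        zero_mul, neg_zero]

/-- Expanding a product of sums against a right factor that kills the second components. -/
lemma right_absorb (l : List (M × M)) (Z : ExteriorAlgebra R M)
    (h : ∀ p ∈ l, ιι p.2 * Z = 0) :
    (l.map fun p => ιι p.1 + ιι p.2).prod * Z
      = (l.map fun p => ιι p.1).prod * Z := by
  induction l with
  | nil => simp
  | cons p t ih =>
    simp only [List.map_cons, List.prod_cons, add_mul, mul_assoc]
    have hmap : (t.map fun q => ιι q.1 + ιι q.2) = ((t.map fun q => q.1 + q.2).map ιι) := by
      rw [List.map_map]; exact List.map_congr_left fun q _ => (map_add _ _ _).symm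
    have h2 : ιι p.2 * ((t.map fun q => ιι q.1 + ιι q.2).prod * Z) = 0 := by
      rw [hmap]; exact ι_mul_prod_mul _ _ _ (h p List.mem_cons_self)
    rw [h2, add_zero, ih (fun q hq => h q (List.mem_cons_of_mem _ hq))]

/-- Module-valued version of `AlternatingMap.eq_smul_basis_det`, over a field. -/
lemma alt_map_eq_det_smul {K V W : Type*} [Field K] [AddCommGroup V] [Module K V]
    [AddCommGroup W] [Module K W] {ι' : Type*} [Fintype ι'] [DecidableEq ι']
    (b : Module.Basis ι' K V) (f : V [⋀^ι']→ₗ[K] W) (v : ι' → V) :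
    f v = b.det v • f b := by
  rw [← sub_eq_zero, ← (Module.forall_dual_apply_eq_zero_iff K (f v - b.det v • f b))]
  intro φ
  have := congrFun (congrArg (fun g => g.toFun)
    (AlternatingMap.eq_smul_basis_det b (φ.compAlternatingMap f))) v
  simp only [map_sub, map_smul, sub_eq_zero]
  simpa [AlternatingMap.smul_apply, smul_eq_mul, mul_comm] using this

end AuxLemmas

noncomputable section Dev

open ExteriorAlgebra

local notation "ιι" => ExteriorAlgebra.ι ℝ

variable {n : ℕ}

/-- The `i`-th column of `M`, as a combination of the `hi` basis vectors. -/
def colv (n : ℕ) (M : Matrix (Fin n) (Fin n) ℝ) (i : Fin n) : Fin (2 * n) → ℝ :=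
  ∑ j : Fin n, M j i • stdv n (hi n j)

/-- The linear map `(Fin n → ℝ) → ℝ^{2n}` sending coordinates to a combination
of given vectors. -/
def lin (n : ℕ) (w : Fin n → (Fin (2 * n) → ℝ)) :
    (Fin n → ℝ) →ₗ[ℝ] (Fin (2 * n) → ℝ) :=
  ∑ j : Fin n, (LinearMap.proj j).smulRight (w j)

lemma lin_apply (w : Fin n → (Fin (2 * n) → ℝ)) (c : Fin n → ℝ) :
    lin n w c = ∑ j : Fin n, c j • w j := by
  simp [lin]

lemma lin_single (w : Fin n → (Fin (2 * n) → ℝ)) (i : Fin n) :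
    lin n w (Pi.single i 1) = w i := by
  rw [lin_apply, Finset.sum_eq_single i]
  · simp
  · intro j _ hj
    rw [Pi.single_eq_of_ne hj, zero_smul]
  · simp

lemma v₂_eq : v₂ n = ((List.ofFn fun i : Fin n => stdv n (hi n i)).map ιι).prod := by
  rw [v₂, List.map_ofFn]; rfl

lemma v₁_eq : v₁ n = ((List.ofFn fun i : Fin n => stdv n (lo n i)).map ιι).prod := by
  rw [v₁, List.map_ofFn]; rfl

lemma vol_eq_v₁_mul_v₂ : vol n = v₁ n * v₂ n := by
  rw [vol, v₁, v₂, ← List.prod_append]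
  congr 1
  apply List.ext_getElem
  · simp [two_mul]
  · intro k h1 h2
    simp only [List.getElem_ofFn, List.getElem_append, List.length_ofFn]
    split_ifs with hk
    · exact congrArg (e n) (Fin.ext rfl)
    · refine congrArg (e n) (Fin.ext ?_)
      simp only [hi]
      simp only [List.length_ofFn] at h1 ⊢
      omega

lemma ι_colv_mul_v₂ (M : Matrix (Fin n) (Fin n) ℝ) (i : Fin n) :
    ιι (colv n M i) * v₂ n = 0 := by
  rw [colv, map_sum, Finset.sum_mul]
  refine Finset.sum_eq_zero fun j _ => ?_
  rw [map_smul, smul_mul_assoc, v₂_eq,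
    ι_mul_prod_of_mem _ _ (by rw [List.mem_ofFn]; exact ⟨j, rfl⟩), smul_zero]

/-- Lemma A: `Λ_M ∧ v₂ = v₁ ∧ v₂`. -/
lemma lambda_mul_v₂ (M : Matrix (Fin n) (Fin n) ℝ) :
    LambdaW n M * v₂ n = v₁ n * v₂ n := by
  have := right_absorb (R := ℝ)
    (List.ofFn fun i : Fin n => (stdv n (lo n i), colv n M i)) (v₂ n)
    (fun p hp => by
      rw [List.mem_ofFn] at hp
      obtain ⟨i, rfl⟩ := hp
      exact ι_colv_mul_v₂ M i)
  rw [List.map_ofFn, List.map_ofFn] at this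
  have hL : LambdaW n M
      = (List.ofFn ((fun p : _ × _ => ιι p.1 + ιι p.2) ∘
          fun i : Fin n => (stdv n (lo n i), colv n M i))).prod := by
    rw [LambdaW]
    congr 1
    exact congrArg List.ofFn (funext fun i => by simp [colv, Function.comp, map_add])
  rw [hL, this, v₁_eq, List.map_ofFn]
  rfl

/-- `v₁ * ι(a_i) = 0`. -/
lemma v₁_mul_ι_lo (i : Fin n) : v₁ n * ιι (stdv n (lo n i)) = 0 := by
  rw [v₁_eq]
  exact prod_mul_ι_of_mem _ _ (by rw [List.mem_ofFn]; exact ⟨i, rfl⟩)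

/-- Lemma B: `v₁ ∧ Λ_N = det N • (v₁ ∧ v₂)`. -/
lemma v₁_mul_lambda (N : Matrix (Fin n) (Fin n) ℝ) :
    v₁ n * LambdaW n N = N.det • (v₁ n * v₂ n) := by
  -- step 1: absorb the `lo` parts
  have habs := left_absorb (R := ℝ)
    (List.ofFn fun i : Fin n => (stdv n (lo n i), colv n N i)) (v₁ n)
    (fun p hp => by
      rw [List.mem_ofFn] at hp
      obtain ⟨i, rfl⟩ := hp
      exact v₁_mul_ι_lo i)
  rw [List.map_ofFn, List.map_ofFn] at habs
  have hL : LambdaW n N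
      = (List.ofFn ((fun p : _ × _ => ιι p.1 + ιι p.2) ∘
          fun i : Fin n => (stdv n (lo n i), colv n N i))).prod := by
    rw [LambdaW]
    congr 1
    exact congrArg List.ofFn (funext fun i => by simp [colv, Function.comp, map_add])
  rw [hL, habs]
  -- step 2: the remaining product is an alternating map of the columns
  set B : (Fin n → ℝ) →ₗ[ℝ] (Fin (2 * n) → ℝ) := lin n (fun j => stdv n (hi n j)) with hB
  set G : (Fin n → ℝ) [⋀^Fin n]→ₗ[ℝ] EA n :=
    (LinearMap.mulLeft ℝ (v₁ n)).compAlternatingMap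
      ((ExteriorAlgebra.ιMulti ℝ n).compLinearMap B) with hG
  have hGapp : ∀ v : Fin n → (Fin n → ℝ),
      G v = v₁ n * (List.ofFn fun i => ιι (B (v i))).prod := by
    intro v
    simp [hG, LinearMap.compAlternatingMap_apply, AlternatingMap.compLinearMap_apply,
      ExteriorAlgebra.ιMulti_apply, LinearMap.mulLeft_apply, Function.comp]
  have hdet := alt_map_eq_det_smul (Pi.basisFun ℝ (Fin n)) G (fun i => N.transpose i)
  rw [hGapp, hGapp] at hdet
  have hBcol : ∀ i, B (N.transpose i) = colv n N i := by
    intro i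
    rw [hB, lin_apply, colv]
    exact Finset.sum_congr rfl fun j _ => by rw [Matrix.transpose_apply]
  have hBbasis : ∀ i : Fin n, B ((Pi.basisFun ℝ (Fin n)) i) = stdv n (hi n i) := by
    intro i
    rw [hB, Pi.basisFun_apply]
    exact lin_single _ i
  have hdetval : (Pi.basisFun ℝ (Fin n)).det (fun i => N.transpose i) = N.det := by
    rw [Pi.basisFun_det]
    have : Matrix.detRowAlternating (fun i => N.transpose i) = (N.transpose).det := rfl
    rw [this, Matrix.det_transpose]
  rw [hdetval] at hdet
  calc v₁ n * (List.ofFn fun i => ιι ((fun p : _ × _ => p.2)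
        ((fun i : Fin n => (stdv n (lo n i), colv n N i)) i))).prod
      = v₁ n * (List.ofFn fun i => ιι (B (N.transpose i))).prod := by
        congr 2
        exact congrArg List.ofFn (funext fun i => by rw [hBcol])
    _ = N.det • (v₁ n * (List.ofFn fun i => ιι (B ((Pi.basisFun ℝ (Fin n)) i))).prod) := hdet
    _ = N.det • (v₁ n * v₂ n) := by
        have hv : (List.ofFn fun i => ιι (B ((Pi.basisFun ℝ (Fin n)) i))).prod = v₂ n := by
          rw [v₂]
          exact congrArg List.prod (congrArg List.ofFn (funext fun i => by rw [hBbasis]; rfl))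
        rw [hv]


/-- The shear `a_i ↦ a_i + (col i of P)`, `b_j ↦ b_j`. -/
def Lmap (n : ℕ) (P : Matrix (Fin n) (Fin n) ℝ) :
    (Fin (2 * n) → ℝ) →ₗ[ℝ] (Fin (2 * n) → ℝ) :=
  LinearMap.id + (lin n (fun i => colv n P i)) ∘ₗ LinearMap.funLeft ℝ ℝ (lo n)

lemma Lmap_lo (P : Matrix (Fin n) (Fin n) ℝ) (i : Fin n) :
    Lmap n P (stdv n (lo n i)) = stdv n (lo n i) + colv n P i := by
  have hproj : (fun k : Fin n => stdv n (lo n i) (lo n k)) = Pi.single i 1 := by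
    funext k
    simp only [stdv, Pi.single_apply]
    by_cases hk : k = i
    · subst hk; simp
    · rw [if_neg hk, if_neg (fun hc => hk (Fin.ext (by simpa [lo] using congrArg Fin.val hc)))]
  simp only [Lmap, LinearMap.add_apply, LinearMap.id_apply, LinearMap.comp_apply]
  congr 1
  have h2 : LinearMap.funLeft ℝ ℝ (lo n) (stdv n (lo n i)) = Pi.single i 1 := hproj
  rw [h2, lin_single]

lemma Lmap_hi (P : Matrix (Fin n) (Fin n) ℝ) (j : Fin n) :
    Lmap n P (stdv n (hi n j)) = stdv n (hi n j) := by
  have hproj : LinearMap.funLeft ℝ ℝ (lo n) (stdv n (hi n j)) = 0 := by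
    funext k
    show stdv n (hi n j) (lo n k) = 0
    simp only [stdv, Pi.single_apply]
    rw [if_neg]
    intro hc
    have := congrArg Fin.val hc
    simp only [lo, hi] at this
    omega
  simp only [Lmap, LinearMap.add_apply, LinearMap.id_apply, LinearMap.comp_apply, hproj,
    map_zero, add_zero]

lemma Lmap_colv (P M : Matrix (Fin n) (Fin n) ℝ) (i : Fin n) :
    Lmap n P (colv n M i) = colv n M i := by
  rw [colv, map_sum]
  exact Finset.sum_congr rfl fun j _ => by rw [map_smul, Lmap_hi]

lemma colv_add_sub (P Q : Matrix (Fin n) (Fin n) ℝ) (i : Fin n) :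
    colv n P i + colv n (Q - P) i = colv n Q i := by
  simp only [colv, ← Finset.sum_add_distrib]
  refine Finset.sum_congr rfl fun j _ => ?_
  rw [← add_smul, Matrix.sub_apply, add_sub_cancel]

lemma phi_v₁ (P : Matrix (Fin n) (Fin n) ℝ) :
    ExteriorAlgebra.map (Lmap n P) (v₁ n) = LambdaW n P := by
  rw [v₁, map_list_prod, List.map_ofFn, LambdaW]
  refine congrArg List.prod (congrArg List.ofFn (funext fun i => ?_))
  simp only [Function.comp, e, ExteriorAlgebra.map_apply_ι, Lmap_lo, colv]

lemma phi_v₂ (P : Matrix (Fin n) (Fin n) ℝ) :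
    ExteriorAlgebra.map (Lmap n P) (v₂ n) = v₂ n := by
  rw [v₂, map_list_prod, List.map_ofFn]
  refine congrArg List.prod (congrArg List.ofFn (funext fun i => ?_))
  simp only [Function.comp, e, ExteriorAlgebra.map_apply_ι, Lmap_hi]

lemma phi_lambda (P Q : Matrix (Fin n) (Fin n) ℝ) :
    ExteriorAlgebra.map (Lmap n P) (LambdaW n (Q - P)) = LambdaW n Q := by
  rw [LambdaW, map_list_prod, List.map_ofFn]
  rw [show LambdaW n Q = (List.ofFn fun i : Fin n =>
      ιι (stdv n (lo n i) + colv n Q i)).prod from by rw [LambdaW]; rfl]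
  refine congrArg List.prod (congrArg List.ofFn (funext fun i => ?_))
  have : (stdv n (lo n i) + ∑ j : Fin n, (Q - P) j i • stdv n (hi n j))
      = stdv n (lo n i) + colv n (Q - P) i := by rw [colv]
  simp only [Function.comp, ExteriorAlgebra.map_apply_ι, this, map_add, Lmap_lo, Lmap_colv]
  have hsum : stdv n (lo n i) + colv n P i + colv n (Q - P) i
      = stdv n (lo n i) + colv n Q i := by rw [add_assoc, colv_add_sub]
  rw [← map_add, ← map_add, hsum, map_add]

end Dev


/-- The fundamental shadow computation of Lemma 5.3 (leminacute):
`Λ_P ∧ Λ_Q = det(Q − P)·vol`, i.e. `ω′(U_P v₁, U_Q v₁) = det(Q − P)`. -/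
theorem wedge_lagrangian_graphs (n : ℕ) (hn : 1 ≤ n)
    (P Q : Matrix (Fin n) (Fin n) ℝ) :
    LambdaW n P * LambdaW n Q = (Q - P).det • vol n := by
  have key := congrArg (ExteriorAlgebra.map (Lmap n P)) (v₁_mul_lambda (n := n) (Q - P))
  rw [map_mul, phi_v₁, phi_lambda, map_smul, map_mul, phi_v₁, phi_v₂, lambda_mul_v₂,
    ← vol_eq_v₁_mul_v₂] at key
  exact key
end

section
/- Fix n ≥ 2 and let N be any real n×n matrix. Then in the exterior algebra ⋀(ℝ^{2n}): v₁ ∧ τ(N) = 0; if n ≥ 3, then τ(N) ∧ τ(N) = 0; and if n = 2, then τ(N) ∧ τ(N) = −2·det(N)·vol. -/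
noncomputable section Aux

lemma prod_zero {n m : ℕ} (v : Fin m → (Fin (2*n) → ℝ)) {i j : Fin m}
    (h : v i = v j) (hij : i ≠ j) :
    ((List.ofFn fun t => ExteriorAlgebra.ι ℝ (v t)).prod : EA n) = 0 := by
  rw [← ExteriorAlgebra.ιMulti_apply]
  exact (ExteriorAlgebra.ιMulti ℝ m).map_eq_zero_of_eq v h hij

lemma prod_mul_prod_zero {n m₁ m₂ : ℕ} (a : Fin m₁ → (Fin (2*n) → ℝ))
    (b : Fin m₂ → (Fin (2*n) → ℝ)) {p : Fin m₁} {q : Fin m₂} (h : a p = b q) :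
    ((List.ofFn fun k => ExteriorAlgebra.ι ℝ (a k)).prod *
      (List.ofFn fun k => ExteriorAlgebra.ι ℝ (b k)).prod : EA n) = 0 := by
  rw [← List.prod_append, ← List.ofFn_fin_append]
  have hfn : Fin.append (fun k => ExteriorAlgebra.ι ℝ (a k)) (fun k => ExteriorAlgebra.ι ℝ (b k))
      = fun t => ExteriorAlgebra.ι ℝ (Fin.append a b t) := by
    funext t
    refine Fin.addCases (fun p => ?_) (fun q => ?_) t <;>
      simp [Fin.append_left, Fin.append_right]
  rw [hfn]
  refine prod_zero (Fin.append a b) (i := Fin.castAdd m₂ p) (j := Fin.natAdd m₁ q) ?_ ?_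
  · simp [Fin.append_left, Fin.append_right, h]
  · intro hc
    have := congrArg Fin.val hc
    simp [Fin.castAdd, Fin.natAdd] at this
    have := p.isLt
    omega

/-- the vector entries of the `i`-th term of `tau`. -/
def tw (n : ℕ) (N : Matrix (Fin n) (Fin n) ℝ) (i k : Fin n) : Fin (2*n) → ℝ :=
  if k = i then (∑ j : Fin n, N j i • stdv n (hi n j)) else stdv n (lo n k)

lemma tau_eq (n : ℕ) (N : Matrix (Fin n) (Fin n) ℝ) :
    tau n N = ∑ i : Fin n, (List.ofFn fun k => ExteriorAlgebra.ι ℝ (tw n N i k)).prod := by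
  unfold tau tw e
  simp only [← apply_ite (ExteriorAlgebra.ι ℝ)]

end Aux

/-- Remark 3.3: for the tangent plane `Span(v₁, τ(N))` of the limit curve one has
`v₁ ∧ τ(N) = 0`; the form `ω′` restricted to this plane vanishes identically when
`n ≥ 3`, i.e. `τ(N) ∧ τ(N) = 0`, while for `n = 2` one has
`τ(N) ∧ τ(N) = −2·det(N)·vol`. -/
theorem tangent_plane_pairings (n : ℕ) (hn : 2 ≤ n) (N : Matrix (Fin n) (Fin n) ℝ) :
    v₁ n * tau n N = 0 ∧
    (3 ≤ n → tau n N * tau n N = 0) ∧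
    (n = 2 → tau n N * tau n N = (-(2 * N.det)) • vol n) := by
  refine ⟨?_, ?_, ?_⟩
  · have hnt : Nontrivial (Fin n) := Fin.nontrivial_iff_two_le.mpr hn
    rw [tau_eq, Finset.mul_sum]
    refine Finset.sum_eq_zero fun i _ => ?_
    obtain ⟨k, hk⟩ := exists_ne i
    have hv : v₁ n = (List.ofFn fun t : Fin n => ExteriorAlgebra.ι ℝ (stdv n (lo n t))).prod := rfl
    rw [hv]
    exact prod_mul_prod_zero _ _ (p := k) (q := k) (by simp [tw, hk])
  · intro h3
    rw [tau_eq, Finset.sum_mul_sum]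
    refine Finset.sum_eq_zero fun i _ => Finset.sum_eq_zero fun i' _ => ?_
    obtain ⟨k, hki, hki'⟩ : ∃ k : Fin n, k ≠ i ∧ k ≠ i' := by
      have h2 : ({i, i'} : Finset (Fin n))ᶜ.Nonempty := by
        rw [← Finset.card_pos, Finset.card_compl, Fintype.card_fin]
        have : ({i, i'} : Finset (Fin n)).card ≤ 2 :=
          (Finset.card_insert_le _ _).trans (by simp)
        omega
      obtain ⟨k, hk⟩ := h2
      simp only [Finset.mem_compl, Finset.mem_insert, Finset.mem_singleton, not_or] at hk
      exact ⟨k, hk.1, hk.2⟩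
    exact prod_mul_prod_zero _ _ (p := k) (q := k) (by simp [tw, hki, hki'])
  · rintro rfl
    have hvol : vol 2 = e 2 (lo 2 0) * (e 2 (lo 2 1) * (e 2 (hi 2 0) * (e 2 (hi 2 1) * 1))) := rfl
    have htau : tau 2 N = ExteriorAlgebra.ι ℝ (N 0 0 • stdv 2 (hi 2 0) + N 1 0 • stdv 2 (hi 2 1)) * (e 2 (lo 2 1) * 1)
        + e 2 (lo 2 0) * (ExteriorAlgebra.ι ℝ (N 0 1 • stdv 2 (hi 2 0) + N 1 1 • stdv 2 (hi 2 1)) * 1) := by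
      show (∑ i : Fin 2, _) = _
      rw [Fin.sum_univ_two]
      norm_num [Fin.sum_univ_two]
    have sw : ∀ (i j : Fin (2*2)), e 2 i * e 2 j = -(e 2 j * e 2 i) := fun i j =>
      eq_neg_of_add_eq_zero_left (ExteriorAlgebra.ι_add_mul_swap _ _)
    have sq : ∀ (i : Fin (2*2)), e 2 i * e 2 i = 0 := fun i => ExteriorAlgebra.ι_sq_zero _
    have sw' : ∀ (i j : Fin (2*2)) (x : EA 2), e 2 i * (e 2 j * x) = -(e 2 j * (e 2 i * x)) := by
      intro i j x; rw [← mul_assoc, sw i j, neg_mul, mul_assoc]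
    have sq' : ∀ (i : Fin (2*2)) (x : EA 2), e 2 i * (e 2 i * x) = 0 := by
      intro i x; rw [← mul_assoc, sq, zero_mul]
    have hE : ∀ j : Fin 2, ExteriorAlgebra.ι ℝ (stdv 2 (hi 2 j)) = e 2 (hi 2 j) := fun _ => rfl
    rw [htau, hvol, Matrix.det_fin_two]
    simp only [map_add, map_smul, hE, mul_one]
    simp only [mul_add, add_mul, smul_mul_assoc, mul_smul_comm, mul_assoc]
    simp only [sw' (lo 2 1) (lo 2 0), sw' (hi 2 0) (lo 2 0), sw' (hi 2 0) (lo 2 1),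
      sw' (hi 2 1) (lo 2 0), sw' (hi 2 1) (lo 2 1), sw' (hi 2 1) (hi 2 0),
      sq' (lo 2 0), sq' (lo 2 1), sq' (hi 2 0), sq' (hi 2 1),
      sw (lo 2 1) (lo 2 0), sw (hi 2 0) (lo 2 0), sw (hi 2 0) (lo 2 1),
      sw (hi 2 1) (lo 2 0), sw (hi 2 1) (lo 2 1), sw (hi 2 1) (hi 2 0),
      sq (lo 2 0), sq (lo 2 1), sq (hi 2 0), sq (hi 2 1),
      mul_neg, mul_zero, smul_neg, smul_zero, neg_neg, add_zero, zero_add, neg_zero]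
    module
end
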